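/- arXiv:2407.00962 — 7 statements merged into one kernel-verified Lean document; each statement's English description precedes it below -/
import Mathlib

section
/- (Euler's trace formula) Let K be a field and f ∈ K[X] a monic separable polynomial of degree n with splitting field L, so that B = K[x]/(f) embeds into a product of copies of L via the roots of f. Then for 0 ≤ k ≤ n-1, the trace from B to K of x^k / f'(x) equals 0 if k < n-1 and equals 1 if k = n-1. -/
open Polynomial

section Aux

variable {L : Type*} [Field L]

/-- Euler's identity for a finite set of nodes, via Lagrange interpolation:
the sum over nodes `α` of `α^k / N'(α)` (with `N` the nodal polynomial) is
`0` for `k < card - 1` and `1` for `k = card - 1`. -/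
lemma euler_sum_lagrange [DecidableEq L] (t : Finset L) (k : ℕ) (hk : k < t.card) :
    ∑ α ∈ t, α ^ k * (Polynomial.eval α (derivative (Lagrange.nodal t id)))⁻¹ =
      if k = t.card - 1 then 1 else 0 := by
  have hinj : Set.InjOn id (t : Set L) := fun a _ b _ h => h
  have hX : (X ^ k : L[X]) =
      Lagrange.interpolate t id (fun α => (X ^ k : L[X]).eval (id α)) := by
    apply Lagrange.eq_interpolate hinj
    rw [degree_X_pow]
    exact_mod_cast hk
  have hb : ∀ α ∈ t, (Lagrange.basis t id α).coeff (t.card - 1) =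
      (Polynomial.eval α (derivative (Lagrange.nodal t id)))⁻¹ := by
    intro α hα
    rw [Lagrange.basis_eq_prod_sub_inv_mul_nodal_div hα,
      ← Lagrange.nodal_erase_eq_nodal_div hα, coeff_C_mul]
    have hm : (Lagrange.nodal (t.erase α) id).Monic := Lagrange.nodal_monic
    have hd : (Lagrange.nodal (t.erase α) id).natDegree = t.card - 1 := by
      rw [Lagrange.natDegree_nodal, Finset.card_erase_of_mem hα]
    rw [← hd, hm.coeff_natDegree, mul_one]
    exact Lagrange.nodalWeight_eq_eval_derivative_nodal hα
  have h := congrArg (fun p : L[X] => p.coeff (t.card - 1)) hX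
  simp only [coeff_X_pow, Lagrange.interpolate_apply, finset_sum_coeff, coeff_C_mul,
    eval_pow, eval_X, id] at h
  rw [Finset.sum_congr rfl fun α hα => by rw [hb α hα]] at h
  rw [← h]
  by_cases hkk : k = t.card - 1
  · subst hkk
    simp
  · rw [if_neg hkk, if_neg (fun h' => hkk h'.symm)]

/-- The trace from `L[x]/(N)` to `L`, with `N` the (squarefree) nodal polynomial of a
finite set `t`, of the class of a polynomial `w` is the sum of the values of `w` at
the nodes. -/
lemma trace_adjoinRoot_nodal [DecidableEq L] (t : Finset L) (w : L[X]) :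
    Algebra.trace L (AdjoinRoot (Lagrange.nodal t id)) (AdjoinRoot.mk _ w) =
      ∑ α ∈ t, w.eval α := by
  classical
  induction t using Finset.induction_on with
  | empty =>
    rw [Finset.sum_empty]
    have : AdjoinRoot.mk (Lagrange.nodal (∅ : Finset L) id) w = 0 := by
      rw [AdjoinRoot.mk_eq_zero, Lagrange.nodal_empty]
      exact one_dvd _
    rw [this, map_zero]
  | @insert a u ha ih =>
    have hnod : Lagrange.nodal (insert a u) id = (X - C a) * Lagrange.nodal u id :=
      Lagrange.nodal_insert_eq_nodal ha
    have hqa : Polynomial.eval a (Lagrange.nodal u id) ≠ 0 := by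
      rw [Lagrange.eval_nodal]
      exact Finset.prod_ne_zero_iff.mpr fun i hi => sub_ne_zero_of_ne (by
        rintro rfl; exact ha hi)
    have hcop : IsCoprime (X - C a) (Lagrange.nodal u id) :=
      (Polynomial.irreducible_X_sub_C a).coprime_iff_not_dvd.mpr (by
        rw [dvd_iff_isRoot]; exact hqa)
    have hIcop : IsCoprime (Ideal.span {X - C a}) (Ideal.span {Lagrange.nodal u id}) :=
      (Ideal.isCoprime_span_singleton_iff _ _).mpr hcop
    -- the CRT ring equivalence
    let e : AdjoinRoot ((X - C a) * Lagrange.nodal u id) ≃+*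
        AdjoinRoot (X - C a) × AdjoinRoot (Lagrange.nodal u id) :=
      (Ideal.quotEquivOfEq (by
        rw [Ideal.span_singleton_mul_span_singleton])).trans
        (Ideal.quotientMulEquivQuotientProd _ _ hIcop)
    have he : ∀ v : L[X], e (AdjoinRoot.mk _ v) =
        (AdjoinRoot.mk _ v, AdjoinRoot.mk _ v) := by
      intro v
      show ((Ideal.quotEquivOfEq _).trans (Ideal.quotientMulEquivQuotientProd _ _ hIcop))
        (Ideal.Quotient.mk _ v) = _
      rw [RingEquiv.trans_apply, Ideal.quotEquivOfEq_mk]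
      ext
      · rw [Ideal.quotientMulEquivQuotientProd_fst, Ideal.Quotient.factor_mk]; rfl
      · rw [Ideal.quotientMulEquivQuotientProd_snd, Ideal.Quotient.factor_mk]; rfl
    let eA : AdjoinRoot ((X - C a) * Lagrange.nodal u id) ≃ₐ[L]
        AdjoinRoot (X - C a) × AdjoinRoot (Lagrange.nodal u id) :=
      AlgEquiv.ofRingEquiv (f := e) (fun x => by
        have h1 : (algebraMap L (AdjoinRoot ((X - C a) * Lagrange.nodal u id))) x =
            AdjoinRoot.mk _ (C x) := rfl
        rw [h1, he]
        rfl)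
    -- finiteness instances
    have hp0 : (X - C a) ≠ 0 := X_sub_C_ne_zero a
    have hq0 : Lagrange.nodal u id ≠ 0 := Lagrange.nodal_ne_zero
    haveI : Module.Free L (AdjoinRoot (X - C a)) :=
      Module.Free.of_basis (AdjoinRoot.powerBasis hp0).basis
    haveI : Module.Finite L (AdjoinRoot (X - C a)) :=
      Module.Finite.of_basis (AdjoinRoot.powerBasis hp0).basis
    haveI : Module.Free L (AdjoinRoot (Lagrange.nodal u id)) :=
      Module.Free.of_basis (AdjoinRoot.powerBasis hq0).basis
    haveI : Module.Finite L (AdjoinRoot (Lagrange.nodal u id)) :=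
      Module.Finite.of_basis (AdjoinRoot.powerBasis hq0).basis
    -- trace of the linear factor
    have hlin : Algebra.trace L (AdjoinRoot (X - C a)) (AdjoinRoot.mk _ w) = w.eval a := by
      let e2 : AdjoinRoot (X - C a) ≃ₐ[L] L := Polynomial.quotientSpanXSubCAlgEquiv a
      have := Algebra.trace_eq_of_algEquiv e2 (AdjoinRoot.mk _ w)
      rw [← this]
      have h2 : e2 (AdjoinRoot.mk _ w) = w.eval a :=
        Polynomial.quotientSpanXSubCAlgEquiv_mk a w
      rw [h2]
      simpa using Algebra.trace_algebraMap (R := L) (S := L) (w.eval a)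
    calc Algebra.trace L (AdjoinRoot (Lagrange.nodal (insert a u) id))
          (AdjoinRoot.mk _ w)
        = Algebra.trace L (AdjoinRoot ((X - C a) * Lagrange.nodal u id))
          (AdjoinRoot.mk _ w) := by rw [hnod]
      _ = Algebra.trace L (AdjoinRoot (X - C a) × AdjoinRoot (Lagrange.nodal u id))
          (eA (AdjoinRoot.mk _ w)) := (Algebra.trace_eq_of_algEquiv eA _).symm
      _ = w.eval a + ∑ α ∈ u, w.eval α := by
          rw [show eA (AdjoinRoot.mk _ w) =
            (AdjoinRoot.mk _ w, AdjoinRoot.mk _ w) from he w]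
          rw [Algebra.trace_prod_apply, hlin, ih]
      _ = ∑ α ∈ insert a u, w.eval α := by rw [Finset.sum_insert ha]

/-- The trace is compatible with extension of scalars along a ring hom `σ : K →+* L`,
given a ring hom `φ` of the algebras matching `σ` on scalars and matching given bases. -/
lemma trace_map_of_basis {K L A A' : Type*} [Field K] [Field L] [CommRing A] [CommRing A']
    [Algebra K A] [Algebra L A'] (σ : K →+* L) (φ : A →+* A')
    (hφ : ∀ c : K, φ (algebraMap K A c) = algebraMap L A' (σ c))
    {ι : Type*} [Fintype ι] [DecidableEq ι] (b : Module.Basis ι K A) (b' : Module.Basis ι L A')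
    (hb : ∀ i, φ (b i) = b' i) (z : A) :
    Algebra.trace L A' (φ z) = σ (Algebra.trace K A z) := by
  have key : ∀ v : A, ∀ i, b'.repr (φ v) i = σ (b.repr v i) := by
    intro v i
    have hv : φ v = ∑ j, σ (b.repr v j) • b' j := by
      conv_lhs => rw [← b.sum_repr v]
      rw [map_sum]
      refine Finset.sum_congr rfl fun j _ => ?_
      rw [Algebra.smul_def, map_mul, hφ, hb, ← Algebra.smul_def]
    rw [hv, b'.repr_sum_self]
  rw [Algebra.trace_eq_matrix_trace b z, Algebra.trace_eq_matrix_trace b' (φ z),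
    Matrix.trace, Matrix.trace, map_sum]
  refine Finset.sum_congr rfl fun i _ => ?_
  rw [Matrix.diag_apply, Matrix.diag_apply, Algebra.leftMulMatrix_eq_repr_mul,
    Algebra.leftMulMatrix_eq_repr_mul, ← hb, ← map_mul φ z (b i)]
  exact key _ i

end Aux

/-- Euler's trace formula: for a monic separable polynomial `f` of degree `n` over a
field `K` and `B = K[x]/(f)`, in which the derivative `f'` is invertible (with inverse
`g`), the trace from `B` to `K` of `x^k / f'(x)` is `0` for `k < n - 1` and `1` for
`k = n - 1`. -/
theorem euler_trace_formula {K : Type*} [Field K] {n : ℕ} (hn : 1 ≤ n) (f : K[X])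
    (hmonic : f.Monic) (hsep : f.Separable) (hdeg : f.natDegree = n)
    (g : AdjoinRoot f) (hg : g * AdjoinRoot.mk f (derivative f) = 1) :
    ∀ k : ℕ, k < n →
      Algebra.trace K (AdjoinRoot f) (AdjoinRoot.root f ^ k * g) =
        if k = n - 1 then 1 else 0 := by
  classical
  intro k hk
  have hf0 : f ≠ 0 := hmonic.ne_zero
  set L := f.SplittingField with hL
  let σ : K →+* L := algebraMap K L
  set fL := f.map σ with hfLdef
  have hfLmonic : fL.Monic := hmonic.map σ
  have hfL0 : fL ≠ 0 := hfLmonic.ne_zero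
  have hsplits : fL.Splits :=
    SplittingField.splits f
  have hnodup : fL.roots.Nodup := nodup_roots (hsep.map (f := σ))
  set t := fL.roots.toFinset with ht
  have htval : t.val = fL.roots := Multiset.dedup_eq_self.mpr hnodup
  have htcard : t.card = n := by
    show Multiset.card t.val = n
    rw [htval, splits_iff_card_roots.mp hsplits, natDegree_map, hdeg]
  have hprod : fL = Lagrange.nodal t id := by
    conv_lhs => rw [hsplits.eq_prod_roots_of_monic hfLmonic]
    simp only [Lagrange.nodal, id]
    rw [Finset.prod_eq_multiset_prod, htval]
  obtain ⟨w, rfl⟩ := AdjoinRoot.mk_surjective g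
  -- the natural map `K[x]/(f) → L[x]/(fL)`
  have hroot : f.eval₂ ((AdjoinRoot.of fL).comp σ) (AdjoinRoot.root fL) = 0 := by
    rw [← Polynomial.eval₂_map]
    exact AdjoinRoot.eval₂_root fL
  let φ : AdjoinRoot f →+* AdjoinRoot fL :=
    AdjoinRoot.lift ((AdjoinRoot.of fL).comp σ) (AdjoinRoot.root fL) hroot
  have hφmk : ∀ v : K[X], φ (AdjoinRoot.mk f v) = AdjoinRoot.mk fL (v.map σ) := by
    intro v
    rw [show φ (AdjoinRoot.mk f v)
        = v.eval₂ ((AdjoinRoot.of fL).comp σ) (AdjoinRoot.root fL) from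
      AdjoinRoot.lift_mk hroot v]
    rw [← Polynomial.eval₂_map, ← AdjoinRoot.algebraMap_eq, ← aeval_def, AdjoinRoot.aeval_eq]
  have hφalg : ∀ c : K, φ (algebraMap K (AdjoinRoot f) c)
      = algebraMap L (AdjoinRoot fL) (σ c) := by
    intro c
    rw [show algebraMap K (AdjoinRoot f) c = AdjoinRoot.mk f (C c) from rfl, hφmk, map_C]
    rfl
  -- bases
  have hdim : fL.natDegree = f.natDegree := natDegree_map σ
  let pb := AdjoinRoot.powerBasis hf0
  let pbL := AdjoinRoot.powerBasis hfL0
  let b' : Module.Basis (Fin f.natDegree) L (AdjoinRoot fL) := pbL.basis.reindex (finCongr hdim)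
  have hφroot : φ (AdjoinRoot.root f) = AdjoinRoot.root fL := by
    rw [show AdjoinRoot.root f = AdjoinRoot.mk f X from rfl, hφmk, map_X]
    rfl
  have hφb : ∀ i : Fin f.natDegree, φ (pb.basis i) = b' i := by
    intro i
    rw [pb.coe_basis, Module.Basis.reindex_apply, pbL.coe_basis]
    simp only [AdjoinRoot.powerBasis_gen, pb, pbL]
    rw [map_pow, hφroot]
    congr 1
  have key := trace_map_of_basis σ φ hφalg pb.basis b' hφb
    (AdjoinRoot.root f ^ k * AdjoinRoot.mk f w)
  have hφel : φ (AdjoinRoot.root f ^ k * AdjoinRoot.mk f w)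
      = AdjoinRoot.mk fL (X ^ k * w.map σ) := by
    rw [map_mul, map_pow, hφroot, hφmk, map_mul, map_pow]
    rfl
  -- values of `w.map σ` at the roots
  have hdvd : fL ∣ (w.map σ * derivative fL - 1) := by
    have h1 : AdjoinRoot.mk f (w * derivative f - 1) = 0 := by
      rw [map_sub, map_mul, map_one, hg, sub_self]
    have h2 : f ∣ (w * derivative f - 1) := AdjoinRoot.mk_eq_zero.mp h1
    have h3 := map_dvd (Polynomial.mapRingHom σ) h2
    simpa only [coe_mapRingHom, Polynomial.map_sub, Polynomial.map_mul, Polynomial.map_one,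
      ← derivative_map] using h3
  have heval : ∀ α ∈ t, Polynomial.eval α (w.map σ)
      = (Polynomial.eval α (derivative (Lagrange.nodal t id)))⁻¹ := by
    intro α hα
    have hαroot : fL.eval α = 0 :=
      isRoot_of_mem_roots (Multiset.mem_toFinset.mp hα)
    obtain ⟨c, hc⟩ := hdvd
    have h4 := congrArg (Polynomial.eval α) hc
    rw [eval_sub, eval_mul, eval_mul, hαroot, zero_mul, eval_one, sub_eq_zero] at h4
    rw [← hprod]
    exact eq_inv_of_mul_eq_one_left (mul_comm (eval α (map σ w)) _ ▸ h4)
  have hL2 : Algebra.trace L (AdjoinRoot fL) (AdjoinRoot.mk fL (X ^ k * w.map σ))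
      = if k = n - 1 then (1 : L) else 0 := by
    rw [hprod, trace_adjoinRoot_nodal]
    rw [Finset.sum_congr rfl (fun α hα => by
      rw [eval_mul, eval_pow, eval_X, heval α hα])]
    rw [euler_sum_lagrange t k (htcard.symm ▸ hk), htcard]
  apply σ.injective
  rw [← key, hφel, hL2]
  split_ifs <;> simp
end

section
/- The bilinear form β* on B = A[x]/(f) defined by β*(b_1, b_2) = (the coefficient of x^{n-1} in the product b_1 b_2, written in the basis 1, x, ..., x^{n-1}) is a symmetric, nondegenerate (perfect) A-bilinear pairing on B. -/
open Polynomial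

/-- The pairing `β*(b₁, b₂) = (coefficient of x^{n-1} in b₁b₂ w.r.t. the basis
`1, x, ..., x^{n-1}`)` on `B = A[x]/(f)` is a symmetric, nondegenerate (perfect)
`A`-bilinear pairing: the induced map `B → Hom_A(B, A)` is bijective. -/
theorem beta_pairing_symm_perfect {A : Type*} [CommRing A] {n : ℕ} (hn : 1 ≤ n)
    (f : A[X]) (hmonic : f.Monic) (hdeg : f.natDegree = n)
    (b : Module.Basis (Fin n) A (AdjoinRoot f))
    (hb : ∀ i : Fin n, b i = AdjoinRoot.root f ^ (i : ℕ)) :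
    (∀ b₁ b₂ : AdjoinRoot f,
        b.coord ⟨n - 1, by omega⟩ (b₁ * b₂) = b.coord ⟨n - 1, by omega⟩ (b₂ * b₁)) ∧
      Function.Bijective fun b₁ : AdjoinRoot f =>
        (b.coord ⟨n - 1, by omega⟩).comp (LinearMap.mulLeft A b₁) := by
  classical
  set B := AdjoinRoot f
  set k : Fin n := ⟨n - 1, by omega⟩
  refine ⟨fun b₁ b₂ => by rw [mul_comm], ?_⟩
  -- the bilinear pairing as a linear map into the dual
  set Φ : B →ₗ[A] Module.Dual A B :=
    (LinearMap.llcomp A B B A (b.coord k)).comp (LinearMap.mul A B) with hΦ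
  have hfun : (fun b₁ : B => (b.coord k).comp (LinearMap.mulLeft A b₁)) = ⇑Φ := by
    funext b₁; ext x
    simp [hΦ, LinearMap.mul_apply', LinearMap.llcomp_apply', Module.Basis.coord_apply]; rfl
  rw [hfun]
  -- coordinates of powers of the root
  have hcoord : ∀ m : Fin n, b.coord k (AdjoinRoot.root f ^ (m : ℕ)) =
      if m = k then 1 else 0 := by
    intro m
    rw [← hb m]
    simp [Module.Basis.coord_apply, Module.Basis.repr_self, Finsupp.single_apply]
  -- matrix of Φ
  set M : Matrix (Fin n) (Fin n) A := LinearMap.toMatrix b b.dualBasis Φ with hM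
  have hMentry : ∀ i j : Fin n, M i j = b.coord k (AdjoinRoot.root f ^ ((j : ℕ) + (i : ℕ))) := by
    intro i j
    rw [hM, LinearMap.toMatrix_apply, Module.Basis.dualBasis_repr]
    simp [hΦ, LinearMap.mul_apply', LinearMap.llcomp_apply', Module.Basis.coord_apply, hb, pow_add]; rfl
  -- the column-reversed matrix is lower triangular with 1's on the diagonal
  set N : Matrix (Fin n) (Fin n) A := M.submatrix id Fin.rev with hN
  have hNlt : ∀ i j : Fin n, i < j → N i j = 0 := by
    intro i j hij
    rw [hN]
    simp only [Matrix.submatrix_apply, id_eq]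
    rw [hMentry i j.rev]
    have h1 : (j.rev : ℕ) + (i : ℕ) < n := by
      have := j.rev.is_lt
      have hji : (i : ℕ) < (j : ℕ) := hij
      have hrev := Fin.val_rev j
      omega
    have h2 : (⟨(j.rev : ℕ) + (i : ℕ), h1⟩ : Fin n) ≠ k := by
      intro h
      have := congrArg Fin.val h
      simp only [k] at this
      have hji : (i : ℕ) < (j : ℕ) := hij
      have hrev := Fin.val_rev j
      omega
    have := hcoord ⟨(j.rev : ℕ) + (i : ℕ), h1⟩
    simp only [h2, if_false] at this
    exact this
  have hNdiag : ∀ i : Fin n, N i i = 1 := by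
    intro i
    rw [hN]
    simp only [Matrix.submatrix_apply, id_eq]
    rw [hMentry i i.rev]
    have h1 : (i.rev : ℕ) + (i : ℕ) < n := by
      have hrev := Fin.val_rev i
      have := i.is_lt
      omega
    have h2 : (⟨(i.rev : ℕ) + (i : ℕ), h1⟩ : Fin n) = k := by
      apply Fin.ext
      have hrev := Fin.val_rev i
      have := i.is_lt
      simp only [k]
      omega
    have := hcoord ⟨(i.rev : ℕ) + (i : ℕ), h1⟩
    simp only [h2, if_true] at this
    exact this
  have hNdet : N.det = 1 := by
    rw [Matrix.det_of_lowerTriangular N (by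
      intro i j hij
      exact hNlt i j hij)]
    simp [hNdiag]
  have hMdet : IsUnit M.det := by
    have hperm := Matrix.det_permute' (Fin.revPerm (n := n)) M
    have hsub : M.submatrix id ⇑(Fin.revPerm (n := n)) = N := by
      ext i j
      rw [hN]
      simp
    rw [hsub, hNdet] at hperm
    rcases Int.units_eq_one_or (Equiv.Perm.sign (Fin.revPerm (n := n))) with h | h <;>
      rw [h] at hperm <;> simp at hperm
    · exact hperm ▸ isUnit_one
    · exact IsUnit.of_mul_eq_one (a := M.det) (-1) (by rw [mul_neg_one]; exact hperm.symm)
  have hbij := (LinearEquiv.ofIsUnitDet hMdet).bijective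
  have hcoe : ⇑(LinearEquiv.ofIsUnitDet hMdet) = ⇑Φ := by
    funext x
    rw [LinearEquiv.ofIsUnitDet_apply]
  rwa [hcoe] at hbij
end

section
/- Let A be a commutative ring, f = x^{2n} + a_2 x^{2n-2} + ... + a_{2n} ∈ A[x] an even monic polynomial, B = A[x]/(f), τ the involution with τ(x) = -x, and β* the pairing β*(b_1,b_2) = coefficient of x^{2n-1} in b_1 b_2. Then the form ω(b_1, b_2) := β*(b_1, τ(b_2)) is alternating: ω(b_1, b_2) = -ω(b_2, b_1) for all b_1, b_2 ∈ B, and ω is a perfect pairing. -/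
open Polynomial

/-- For `B = A[x]/(f)` with `f = x^{2n} + a_2 x^{2n-2} + ... + a_{2n}` even monic,
`τ` the involution with `τ(x) = -x`, and `β*` extracting the coefficient of `x^{2n-1}`,
the form `ω(b₁, b₂) = β*(b₁, τ(b₂))` is alternating (`ω(b₁,b₂) = -ω(b₂,b₁)`) and is a
perfect pairing (the induced map `B → Hom_A(B,A)` is bijective). -/
theorem omega_alternating_perfect {A : Type*} [CommRing A] {n : ℕ} (hn : 1 ≤ n)
    (a : Fin n → A) (f : A[X])
    (hf : f = X ^ (2 * n) + ∑ j : Fin n, C (a j) * X ^ (2 * n - 2 * ((j : ℕ) + 1)))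
    (b : Module.Basis (Fin (2 * n)) A (AdjoinRoot f))
    (hb : ∀ i : Fin (2 * n), b i = AdjoinRoot.root f ^ (i : ℕ))
    (τ : AdjoinRoot f →ₐ[A] AdjoinRoot f)
    (hτ : τ (AdjoinRoot.root f) = -AdjoinRoot.root f) :
    (∀ b₁ b₂ : AdjoinRoot f,
        b.coord ⟨2 * n - 1, by omega⟩ (b₁ * τ b₂) =
          -b.coord ⟨2 * n - 1, by omega⟩ (b₂ * τ b₁)) ∧
      Function.Bijective fun b₁ : AdjoinRoot f =>
        (b.coord ⟨2 * n - 1, by omega⟩).comp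
          ((LinearMap.mulLeft A b₁).comp τ.toLinearMap) := by
  have hk : 2 * n - 1 < 2 * n := by omega
  set k : Fin (2 * n) := ⟨2 * n - 1, hk⟩ with hkdef
  -- τ is an involution
  have hτ2 : ∀ z, τ (τ z) = z := by
    have h : τ.comp τ = AlgHom.id A (AdjoinRoot f) := by
      apply AdjoinRoot.algHom_ext
      simp [hτ]
    intro z
    have := AlgHom.congr_fun h z
    simpa using this
  -- coordinate of powers of the root
  have hcoord : ∀ i : Fin (2 * n),
      b.coord k (AdjoinRoot.root f ^ (i : ℕ)) = if i = k then 1 else 0 := by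
    intro i
    rw [← hb, Module.Basis.coord_apply, b.repr_self, Finsupp.single_apply]
  -- φ ∘ τ = -φ
  have hφτ : ∀ z, b.coord k (τ z) = - b.coord k z := by
    have h : (b.coord k).comp τ.toLinearMap = -(b.coord k) := by
      apply b.ext
      intro i
      rw [LinearMap.comp_apply, AlgHom.toLinearMap_apply, hb, map_pow, hτ]
      rcases Nat.even_or_odd (i : ℕ) with he | ho
      · rw [he.neg_pow]
        have hik : i ≠ k := by
          intro h'
          have : (i : ℕ) = 2 * n - 1 := by rw [h']
          rcases he with ⟨c, hc⟩
          omega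
        simp [hcoord, hb, hik, hik]
      · rw [ho.neg_pow, map_neg]
        simp [hcoord, hb]
    intro z
    have := LinearMap.congr_fun h z
    simpa using this
  constructor
  · intro b₁ b₂
    have h1 : τ (b₂ * τ b₁) = b₁ * τ b₂ := by
      rw [map_mul, hτ2, mul_comm]
    calc b.coord k (b₁ * τ b₂) = b.coord k (τ (b₂ * τ b₁)) := by rw [h1]
      _ = - b.coord k (b₂ * τ b₁) := hφτ _
  · -- perfectness
    -- the map without τ
    let L : AdjoinRoot f →ₗ[A] Module.Dual A (AdjoinRoot f) :=
      { toFun := fun b₁ => (b.coord k).comp (LinearMap.mulLeft A b₁)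
        map_add' := by
          intro x y
          ext z
          simp [add_mul]
        map_smul' := by
          intro c x
          ext z
          simp [smul_mul_assoc] }
    let M := LinearMap.toMatrix b b.dualBasis L
    have hM : ∀ i j : Fin (2 * n), (i : ℕ) + (j : ℕ) < 2 * n →
        M i j = if (i : ℕ) + (j : ℕ) = 2 * n - 1 then 1 else 0 := by
      intro i j hij
      have : M i j = b.coord k (b j * b i) := by
        simp [M, LinearMap.toMatrix_apply, Module.Basis.dualBasis_repr, L]
      rw [this, hb, hb, ← pow_add]
      have : (j : ℕ) + (i : ℕ) = ((⟨(i : ℕ) + (j : ℕ), hij⟩ : Fin (2 * n)) : ℕ) := by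
        simp [Nat.add_comm]
      rw [this, hcoord]
      simp [Fin.ext_iff, hkdef]
    have hdet : IsUnit M.det := by
      have htri : (M.submatrix (Fin.revPerm : Equiv.Perm (Fin (2 * n))) id).BlockTriangular id := by
        intro i j hji
        have hji' : (j : ℕ) < (i : ℕ) := hji
        have hrev : ((Fin.revPerm i : Fin (2 * n)) : ℕ) = 2 * n - 1 - (i : ℕ) := by
          simp [Fin.revPerm, Fin.rev]
          omega
        have hlt : ((Fin.revPerm i : Fin (2 * n)) : ℕ) + (j : ℕ) < 2 * n := by
          rw [hrev]; omega
        rw [Matrix.submatrix_apply, id, hM _ _ hlt, hrev]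
        have : ¬ (2 * n - 1 - (i : ℕ) + (j : ℕ) = 2 * n - 1) := by
          have := i.isLt
          omega
        simp [this]
      have hdiag : ∀ i : Fin (2 * n), (M.submatrix (Fin.revPerm : Equiv.Perm (Fin (2 * n))) id) i i = 1 := by
        intro i
        have hrev : ((Fin.revPerm i : Fin (2 * n)) : ℕ) = 2 * n - 1 - (i : ℕ) := by
          simp [Fin.revPerm, Fin.rev]
          omega
        have hlt : ((Fin.revPerm i : Fin (2 * n)) : ℕ) + (i : ℕ) < 2 * n := by
          rw [hrev]; omega
        rw [Matrix.submatrix_apply, id, hM _ _ hlt, hrev]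
        have : 2 * n - 1 - (i : ℕ) + (i : ℕ) = 2 * n - 1 := by
          have := i.isLt; omega
        simp [this]
      have hdet1 : (M.submatrix (Fin.revPerm : Equiv.Perm (Fin (2 * n))) id).det = 1 := by
        rw [Matrix.det_of_upperTriangular htri]
        exact Finset.prod_eq_one fun i _ => hdiag i
      rw [Matrix.det_permute] at hdet1
      rcases Int.units_eq_one_or (Equiv.Perm.sign (Fin.revPerm : Equiv.Perm (Fin (2 * n)))) with hs | hs <;>
        rw [hs] at hdet1
      · simp at hdet1
        rw [hdet1]; exact isUnit_one
      · simp only [Units.val_neg, Units.val_one, neg_one_mul] at hdet1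
        have : M.det = -1 := by linear_combination -hdet1
        rw [this]; exact isUnit_one.neg
    have hLbij : Function.Bijective L := by
      have := (LinearEquiv.ofIsUnitDet hdet).bijective
      have hcoe : ⇑(LinearEquiv.ofIsUnitDet hdet) = ⇑L := by
        ext z
        rw [LinearEquiv.ofIsUnitDet_apply]
      rwa [hcoe] at this
    -- precomposition with τ is bijective
    let P : Module.Dual A (AdjoinRoot f) ≃ Module.Dual A (AdjoinRoot f) :=
      { toFun := fun g => g.comp τ.toLinearMap
        invFun := fun g => g.comp τ.toLinearMap
        left_inv := by intro g; ext z; simp [hτ2]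
        right_inv := by intro g; ext z; simp [hτ2] }
    have hfact : (fun b₁ : AdjoinRoot f =>
        (b.coord k).comp ((LinearMap.mulLeft A b₁).comp τ.toLinearMap)) = ⇑P ∘ ⇑L := by
      funext b₁
      ext z
      simp [P, L]
    exact hfact ▸ P.bijective.comp hLbij
end

section
/- Let A be a commutative ring, f_0 = x^{2n} + a_2 x^{2n-2} + ... + a_{2n} an even monic polynomial, f = x·f_0, and B = A[x]/(f), a free A-module of rank 2n+1 with involution τ(x) = -x. Let β*(b_1,b_2) be the coefficient of x^{2n} in b_1b_2. Then ω(b_1,b_2) := β*(b_1, τ(b_2)) is a symmetric perfect pairing on B for which multiplication by x is anti-self-adjoint: ω(x b_1, b_2) + ω(b_1, x b_2) = 0. -/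
open Polynomial

/-- For `B = A[x]/(x·f₀)` with `f₀ = x^{2n} + a_2 x^{2n-2} + ... + a_{2n}` even monic,
`B` free of rank `2n+1` with basis `1, x, ..., x^{2n}`, `τ` the involution `x ↦ -x`,
and `β*` extracting the coefficient of `x^{2n}`, the form `ω(b₁,b₂) = β*(b₁, τ(b₂))`
is a symmetric perfect pairing for which multiplication by `x` is anti-self-adjoint. -/
theorem odd_orthogonal_form {A : Type*} [CommRing A] {n : ℕ} (hn : 1 ≤ n)
    (a : Fin n → A) (f₀ f : A[X])
    (hf₀ : f₀ = X ^ (2 * n) + ∑ j : Fin n, C (a j) * X ^ (2 * n - 2 * ((j : ℕ) + 1)))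
    (hf : f = X * f₀)
    (b : Module.Basis (Fin (2 * n + 1)) A (AdjoinRoot f))
    (hb : ∀ i : Fin (2 * n + 1), b i = AdjoinRoot.root f ^ (i : ℕ))
    (τ : AdjoinRoot f →ₐ[A] AdjoinRoot f)
    (hτ : τ (AdjoinRoot.root f) = -AdjoinRoot.root f) :
    (∀ b₁ b₂ : AdjoinRoot f,
        b.coord ⟨2 * n, by omega⟩ (b₁ * τ b₂) = b.coord ⟨2 * n, by omega⟩ (b₂ * τ b₁)) ∧
      (Function.Bijective fun b₁ : AdjoinRoot f =>
        (b.coord ⟨2 * n, by omega⟩).comp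
          ((LinearMap.mulLeft A b₁).comp τ.toLinearMap)) ∧
      (∀ b₁ b₂ : AdjoinRoot f,
        b.coord ⟨2 * n, by omega⟩ ((AdjoinRoot.root f * b₁) * τ b₂) +
          b.coord ⟨2 * n, by omega⟩ (b₁ * τ (AdjoinRoot.root f * b₂)) = 0) := by
  set r := AdjoinRoot.root f with hr
  set ψ : AdjoinRoot f →ₗ[A] A := b.coord ⟨2 * n, by omega⟩ with hψ
  -- τ is an involution
  have hτ2 : ∀ y, τ (τ y) = y := by
    have h : τ.comp τ = AlgHom.id A (AdjoinRoot f) := by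
      apply AdjoinRoot.algHom_ext
      simp [← hr, hτ]
    intro y
    have := congrArg (fun φ => φ y) h
    simpa using this
  -- power computations
  have hτpow : ∀ m : ℕ, τ (r ^ m) = (-1 : AdjoinRoot f) ^ m * r ^ m := by
    intro m
    rw [map_pow, hτ, neg_pow]
  have hψpow : ∀ m : ℕ, m ≤ 2 * n → ψ (r ^ m) = if m = 2 * n then 1 else 0 := by
    intro m hm
    have : r ^ m = b ⟨m, by omega⟩ := (hb ⟨m, by omega⟩).symm
    rw [this, hψ, Module.Basis.coord_apply, Module.Basis.repr_self, Finsupp.single_apply]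
    by_cases h : m = 2 * n
    · simp [h, Fin.ext_iff]
    · simp [Fin.ext_iff, h]
  -- ψ ∘ τ = ψ
  have hψτ : ∀ y, ψ (τ y) = ψ y := by
    have h : ψ.comp τ.toLinearMap = ψ := by
      apply Module.Basis.ext b
      intro i
      simp only [LinearMap.comp_apply, AlgHom.toLinearMap_apply, hb, hτpow]
      have h1 : ((-1 : AdjoinRoot f) ^ (i : ℕ)) = algebraMap A (AdjoinRoot f) ((-1 : A) ^ (i : ℕ)) := by
        simp
      rw [h1, ← Algebra.smul_def, map_smul]
      rcases eq_or_ne (i : ℕ) (2 * n) with h2 | h2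
      · have : Even (2 * n) := ⟨n, by ring⟩
        rw [h2, this.neg_one_pow, one_smul]
      · have hle : (i : ℕ) ≤ 2 * n := by omega
        rw [hψpow _ hle, if_neg h2, smul_zero]
    intro y
    exact LinearMap.congr_fun h y
  refine ⟨?_, ?_, ?_⟩
  · -- symmetry
    intro b₁ b₂
    show ψ (b₁ * τ b₂) = ψ (b₂ * τ b₁)
    conv_rhs => rw [← hψτ (b₂ * τ b₁)]
    rw [map_mul τ, hτ2 b₁, mul_comm]
  · -- bijectivity
    classical
    set Φ : AdjoinRoot f →ₗ[A] Module.Dual A (AdjoinRoot f) :=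
      { toFun := fun b₁ => ψ.comp ((LinearMap.mulLeft A b₁).comp τ.toLinearMap)
        map_add' := by
          intro x y
          ext z
          simp [add_mul]
        map_smul' := by
          intro c x
          ext z
          simp [smul_mul_assoc] } with hΦ
    have hgoal : (fun b₁ : AdjoinRoot f =>
        (b.coord ⟨2 * n, by omega⟩).comp
          ((LinearMap.mulLeft A b₁).comp τ.toLinearMap)) = ⇑Φ := rfl
    rw [hgoal]
    set M := LinearMap.toMatrix b b.dualBasis Φ with hM
    have hMent : ∀ i j : Fin (2 * n + 1),
        M i j = (-1 : A) ^ (i : ℕ) * ψ (r ^ ((i : ℕ) + (j : ℕ))) := by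
      intro i j
      rw [hM, LinearMap.toMatrix_apply, Module.Basis.dualBasis_repr]
      show ψ (b j * τ (b i)) = _
      rw [hb, hb, hτpow]
      have h1 : r ^ (j : ℕ) * ((-1 : AdjoinRoot f) ^ (i : ℕ) * r ^ (i : ℕ))
          = ((-1 : A) ^ (i : ℕ)) • r ^ ((i : ℕ) + (j : ℕ)) := by
        rw [Algebra.smul_def, map_pow, map_neg, map_one, pow_add]
        ring
      rw [h1, map_smul, smul_eq_mul]
    -- the permuted matrix is upper triangular with unit diagonal
    have hdet : IsUnit M.det := by
      have hperm : (M.submatrix (⇑(Fin.revPerm : Equiv.Perm (Fin (2 * n + 1)))) id).det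
          = Equiv.Perm.sign (Fin.revPerm : Equiv.Perm (Fin (2 * n + 1))) * M.det :=
        Matrix.det_permute _ M
      have htri : (M.submatrix (⇑(Fin.revPerm : Equiv.Perm (Fin (2 * n + 1)))) id).BlockTriangular id := by
        intro i j hij
        have hij' : (j : ℕ) < (i : ℕ) := hij
        simp only [Matrix.submatrix_apply, id_eq, Fin.revPerm_apply]
        rw [hMent]
        have hrev : ((i.rev : Fin (2 * n + 1)) : ℕ) = 2 * n - (i : ℕ) := by
          rw [Fin.val_rev]; omega
        have hlt : ((i.rev : Fin (2 * n + 1)) : ℕ) + (j : ℕ) ≤ 2 * n ∧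
            ((i.rev : Fin (2 * n + 1)) : ℕ) + (j : ℕ) ≠ 2 * n := by
          rw [hrev]; constructor <;> omega
        rw [hψpow _ hlt.1, if_neg hlt.2, mul_zero]
      have hdetN : (M.submatrix (⇑(Fin.revPerm : Equiv.Perm (Fin (2 * n + 1)))) id).det
          = ∏ i : Fin (2 * n + 1),
              (M.submatrix (⇑(Fin.revPerm : Equiv.Perm (Fin (2 * n + 1)))) id) i i :=
        Matrix.det_of_upperTriangular htri
      have hdiag : ∀ i : Fin (2 * n + 1),
          (M.submatrix (⇑(Fin.revPerm : Equiv.Perm (Fin (2 * n + 1)))) id) i i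
            = (-1 : A) ^ (2 * n - (i : ℕ)) := by
        intro i
        simp only [Matrix.submatrix_apply, id_eq, Fin.revPerm_apply]
        rw [hMent]
        have hrev : ((i.rev : Fin (2 * n + 1)) : ℕ) = 2 * n - (i : ℕ) := by
          rw [Fin.val_rev]; omega
        have heq : ((i.rev : Fin (2 * n + 1)) : ℕ) + (i : ℕ) = 2 * n := by
          rw [hrev]; omega
        rw [heq, hψpow _ le_rfl, if_pos rfl, mul_one, hrev]
      have hN : IsUnit (M.submatrix (⇑(Fin.revPerm : Equiv.Perm (Fin (2 * n + 1)))) id).det := by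
        rw [hdetN]
        have hpe : (∏ i : Fin (2 * n + 1),
              (M.submatrix (⇑(Fin.revPerm : Equiv.Perm (Fin (2 * n + 1)))) id) i i)
            = (-1 : A) ^ (∑ i : Fin (2 * n + 1), (2 * n - (i : ℕ))) := calc
          _ = ∏ i : Fin (2 * n + 1), (-1 : A) ^ (2 * n - (i : ℕ)) :=
              Finset.prod_congr rfl (fun i _ => hdiag i)
          _ = (-1 : A) ^ (∑ i : Fin (2 * n + 1), (2 * n - (i : ℕ))) :=
              Finset.prod_pow_eq_pow_sum _ _ _
        rw [hpe]
        exact (isUnit_one.neg).pow _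
      rw [hperm] at hN
      exact isUnit_of_mul_isUnit_right hN
    have hb2 := (LinearEquiv.ofIsUnitDet hdet).bijective
    have hcoe : ⇑(LinearEquiv.ofIsUnitDet hdet) = ⇑Φ := by
      rw [← LinearEquiv.coe_coe, LinearEquiv.coe_ofIsUnitDet]
    rwa [hcoe] at hb2
  · -- anti-self-adjointness
    intro b₁ b₂
    show ψ (r * b₁ * τ b₂) + ψ (b₁ * τ (r * b₂)) = 0
    rw [map_mul τ, hτ]
    have h : b₁ * (-r * τ b₂) = -(r * b₁ * τ b₂) := by ring
    rw [h, map_neg, add_neg_cancel]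
end

section
/- Let A be a commutative ring in which 2 is invertible, B = A[x]/(f) with f monic even of degree 2n, and τ(x) = -x the involution. Then the subalgebra A' = B^τ of τ-fixed elements equals the image of A[y]/(y^n + a_2 y^{n-1} + ... + a_{2n}) under y ↦ x^2, and B is free of rank 2 over A' with basis 1, x, satisfying B ≅ A'[x]/(x^2 - y). -/
open Polynomial

/-- Let `2` be invertible in `A`, `B = A[x]/(f)` with `f = x^{2n} + a_2 x^{2n-2} + ...
+ a_{2n}` even monic, and `τ` the involution with `τ(x) = -x`. Then the subalgebra
`A' = B^τ` of `τ`-fixed elements equals the image of `A[y]/(y^n + a_2 y^{n-1} + ... +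
a_{2n})` under `y ↦ x²` (i.e. the subalgebra generated by `x²`, whose generator `y = x²`
satisfies that polynomial), and `B` is free of rank 2 over `A'` with basis `1, x`
(so `B ≅ A'[x]/(x² - y)`). -/
theorem fixed_subalgebra_and_rank_two {A : Type*} [CommRing A] (h2 : IsUnit (2 : A))
    {n : ℕ} (hn : 1 ≤ n) (a : Fin n → A) (f : A[X])
    (hf : f = X ^ (2 * n) + ∑ j : Fin n, C (a j) * X ^ (2 * n - 2 * ((j : ℕ) + 1)))
    (τ : AdjoinRoot f →ₐ[A] AdjoinRoot f)
    (hτ : τ (AdjoinRoot.root f) = -AdjoinRoot.root f)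
    (hττ : τ.comp τ = AlgHom.id A (AdjoinRoot f)) :
    AlgHom.equalizer τ (AlgHom.id A (AdjoinRoot f)) =
        Algebra.adjoin A {AdjoinRoot.root f ^ 2} ∧
      ((AdjoinRoot.root f ^ 2) ^ n +
          ∑ j : Fin n, algebraMap A (AdjoinRoot f) (a j) *
            (AdjoinRoot.root f ^ 2) ^ (n - ((j : ℕ) + 1)) = 0) ∧
      ∃ b : Module.Basis (Fin 2) (Algebra.adjoin A {AdjoinRoot.root f ^ 2}) (AdjoinRoot f),
        b 0 = 1 ∧ b 1 = AdjoinRoot.root f := by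
  set B := AdjoinRoot f with hB
  set x : B := AdjoinRoot.root f with hx
  set S : Subalgebra A B := Algebra.adjoin A {x ^ 2} with hS
  -- f is monic
  have hmonic : f.Monic := by
    rw [hf]
    apply Polynomial.monic_X_pow_add
    refine (Polynomial.degree_sum_le _ _).trans_lt ?_
    rw [Finset.sup_lt_iff (by exact_mod_cast WithBot.bot_lt_coe (2 * n))]
    intro j _
    refine (Polynomial.degree_C_mul_X_pow_le _ _).trans_lt ?_
    exact_mod_cast Nat.cast_lt.mpr (by omega : 2 * n - 2 * ((j : ℕ) + 1) < 2 * n)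
  -- the root relation
  have hroot : x ^ (2 * n) +
      ∑ j : Fin n, algebraMap A B (a j) * x ^ (2 * n - 2 * ((j : ℕ) + 1)) = 0 := by
    have h0 : aeval x f = 0 := by
      rw [aeval_def, AdjoinRoot.algebraMap_eq]
      exact AdjoinRoot.eval₂_root f
    have h0' : aeval x (X ^ (2 * n) +
        ∑ j : Fin n, C (a j) * X ^ (2 * n - 2 * ((j : ℕ) + 1))) = 0 := by
      rw [← hf]; exact h0
    simpa [map_add, map_pow, map_sum, map_mul, aeval_X, aeval_C] using h0' 
  have hx2n : x ^ (2 * n) =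
      -∑ j : Fin n, algebraMap A B (a j) * x ^ (2 * n - 2 * ((j : ℕ) + 1)) :=
    eq_neg_of_add_eq_zero_left hroot
  -- the submodule spanned by even powers x^{2i}, i < n
  set E : Submodule A B := Submodule.span A (Set.range fun i : Fin n => x ^ (2 * (i : ℕ)))
    with hE
  have hxE : ∀ k : ℕ, x ^ (2 * k) ∈ E := by
    intro k
    induction k using Nat.strong_induction_on with
    | _ k ih =>
      rcases lt_or_ge k n with h | h
      · exact Submodule.subset_span ⟨⟨k, h⟩, rfl⟩
      · have hsplit : x ^ (2 * k) = x ^ (2 * (k - n)) * x ^ (2 * n) := by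
          rw [← pow_add]; congr 1; omega
        rw [hsplit, hx2n, mul_neg, Finset.mul_sum]
        refine neg_mem (Submodule.sum_mem _ fun j _ => ?_)
        have hj : (j : ℕ) < n := j.isLt
        have he : x ^ (2 * (k - n)) * (algebraMap A B (a j) * x ^ (2 * n - 2 * ((j : ℕ) + 1)))
            = a j • x ^ (2 * (k - ((j : ℕ) + 1))) := by
          rw [Algebra.smul_def, mul_left_comm]
          congr 1
          rw [← pow_add]
          congr 1
          omega
        rw [he]
        exact Submodule.smul_mem _ _ (ih _ (by omega))
  -- every element of S is an A-combination of x^{2i}, i < n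
  have hSE : ∀ s ∈ S, ∃ c : Fin n → A, ∑ i : Fin n, c i • x ^ (2 * (i : ℕ)) = s := by
    intro s hs
    rw [← Submodule.mem_span_range_iff_exists_fun, ← hE]
    rw [hS, Algebra.adjoin_singleton_eq_range_aeval, AlgHom.mem_range] at hs
    obtain ⟨P, hP⟩ := hs
    rw [← hP]
    show (aeval (x ^ 2)) P ∈ E
    rw [Polynomial.aeval_eq_sum_range]
    refine Submodule.sum_mem _ fun k _ => Submodule.smul_mem _ _ ?_
    rw [← pow_mul]
    exact hxE k
  -- linear independence of the odd powers x^{2i+1}, i < n, over A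
  have haux : LinearIndependent A (fun i : Fin n => x ^ (2 * (i : ℕ) + 1)) := by
    rcases subsingleton_or_nontrivial A with hA | hA
    · rw [linearIndependent_iff]
      intro l _
      exact Subsingleton.elim l 0
    · have hdeg : f.natDegree = 2 * n := by
        have hlt : (∑ j : Fin n, C (a j) * X ^ (2 * n - 2 * ((j : ℕ) + 1))).degree
            < (X ^ (2 * n) : A[X]).degree := by
          rw [Polynomial.degree_X_pow]
          refine (Polynomial.degree_sum_le _ _).trans_lt ?_
          rw [Finset.sup_lt_iff (by exact_mod_cast WithBot.bot_lt_coe _)]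
          intro j _
          refine (Polynomial.degree_C_mul_X_pow_le _ _).trans_lt ?_
          exact_mod_cast Nat.cast_lt.mpr (by omega : 2 * n - 2 * ((j : ℕ) + 1) < 2 * n)
        have : f.degree = (2 * n : ℕ) := by
          rw [hf, Polynomial.degree_add_eq_left_of_degree_lt hlt, Polynomial.degree_X_pow]
        exact Polynomial.natDegree_eq_of_degree_eq_some this
      set pb := AdjoinRoot.powerBasis' hmonic with hpb
      have hinj : Function.Injective (fun i : Fin n =>
          (⟨2 * (i : ℕ) + 1, by rw [AdjoinRoot.powerBasis'_dim, hdeg]; omega⟩ : Fin pb.dim)) := by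
        intro i j hij
        simp only [Fin.mk.injEq] at hij
        exact Fin.ext (by omega)
      have h1 := pb.basis.linearIndependent.comp _ hinj
      convert h1 with i
      simp only [Function.comp_apply, pb.basis_eq_pow]
      have hgen : pb.gen = x := by
        show (AdjoinRoot.powerBasis' hmonic).gen = x
        rw [AdjoinRoot.powerBasis'_gen, hx]
      rw [hgen]
  -- multiplication by x is injective on S
  have hxq : ∀ q ∈ S, x * q = 0 → q = 0 := by
    intro q hq hq0
    obtain ⟨c, hc⟩ := hSE q hq
    have hsum : ∑ i : Fin n, c i • x ^ (2 * (i : ℕ) + 1) = 0 := by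
      rw [← hq0, ← hc, Finset.mul_sum]
      refine Finset.sum_congr rfl fun i _ => ?_
      rw [mul_smul_comm, pow_succ, mul_comm]
    have hc0 := (Fintype.linearIndependent_iff.mp haux) c hsum
    rw [← hc]
    simp [hc0]
  -- 2 is a unit in B
  have h2B : IsUnit (2 : B) := by
    have := h2.map (algebraMap A B)
    rwa [map_ofNat] at this
  -- τ fixes S pointwise
  have hle : S ≤ AlgHom.equalizer τ (AlgHom.id A B) := by
    rw [hS]
    refine Algebra.adjoin_le ?_
    rintro y hy
    rw [Set.mem_singleton_iff] at hy
    subst hy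
    rw [SetLike.mem_coe, AlgHom.mem_equalizer, map_pow, hτ]
    simp
  have hτS : ∀ s ∈ S, τ s = s := fun s hs => hle hs
  -- decomposition b = p + x * q with p, q ∈ S
  have hdecomp : ∀ b : B, ∃ p ∈ S, ∃ q ∈ S, b = p + x * q := by
    intro b
    have hb : b ∈ Algebra.adjoin A ({x} : Set B) := by
      rw [hx, AdjoinRoot.adjoinRoot_eq_top]; trivial
    induction hb using Algebra.adjoin_induction with
    | mem y hy =>
      rw [Set.mem_singleton_iff] at hy
      subst hy
      exact ⟨0, zero_mem S, 1, one_mem S, by ring⟩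
    | algebraMap r =>
      exact ⟨algebraMap A B r, Subalgebra.algebraMap_mem S r, 0, zero_mem S, by ring⟩
    | add y z hy hz ihy ihz =>
      obtain ⟨p1, hp1, q1, hq1, rfl⟩ := ihy
      obtain ⟨p2, hp2, q2, hq2, rfl⟩ := ihz
      exact ⟨p1 + p2, add_mem hp1 hp2, q1 + q2, add_mem hq1 hq2, by ring⟩
    | mul y z hy hz ihy ihz =>
      obtain ⟨p1, hp1, q1, hq1, rfl⟩ := ihy
      obtain ⟨p2, hp2, q2, hq2, rfl⟩ := ihz
      have hx2 : x ^ 2 ∈ S := Algebra.subset_adjoin rfl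
      exact ⟨p1 * p2 + x ^ 2 * (q1 * q2), add_mem (mul_mem hp1 hp2) (mul_mem hx2 (mul_mem hq1 hq2)),
        p1 * q2 + q1 * p2, add_mem (mul_mem hp1 hq2) (mul_mem hq1 hp2), by ring⟩
  refine ⟨?_, ?_, ?_⟩
  · -- equalizer = adjoin {x^2}
    refine le_antisymm ?_ hle
    intro b hb
    rw [AlgHom.mem_equalizer, AlgHom.id_apply] at hb
    obtain ⟨p, hp, q, hq, rfl⟩ := hdecomp b
    have hτb : τ (p + x * q) = p - x * q := by
      rw [map_add, map_mul, hτS p hp, hτS q hq, hτ]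
      ring
    have h2q : x * (q + q) = 0 := by
      have := hb.symm.trans hτb
      have h' : x * q + x * q = 0 := by linear_combination this
      rw [mul_add]; exact h'
    have hq2 : q + q = 0 := hxq _ (add_mem hq hq) h2q
    have hq0 : q = 0 := by
      have : (2 : B) * q = 0 := by rw [two_mul]; exact hq2
      have := h2B.mul_left_cancel (this.trans (mul_zero (2 : B)).symm)
      exact this
    rw [hq0, mul_zero, add_zero]
    exact hp
  · -- the relation for y = x^2
    have h1 : (x ^ 2) ^ n = x ^ (2 * n) := (pow_mul x 2 n).symm
    have h2' : ∀ j : Fin n, (x ^ 2) ^ (n - ((j : ℕ) + 1)) = x ^ (2 * n - 2 * ((j : ℕ) + 1)) := by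
      intro j
      rw [← pow_mul]
      congr 1
      have := j.isLt
      omega
    rw [h1]
    rw [Finset.sum_congr rfl fun j _ => by rw [h2' j]]
    exact hroot
  · -- the basis 1, x over S
    have hli : LinearIndependent S (![1, x] : Fin 2 → B) := by
      rw [Fintype.linearIndependent_iff]
      intro g hg
      rw [Fin.sum_univ_two] at hg
      simp only [Matrix.cons_val_zero, Matrix.cons_val_one, Matrix.head_cons] at hg
      have hg' : (↑(g 0) : B) + x * ↑(g 1) = 0 := by
        rw [Algebra.smul_def, Algebra.smul_def] at hg
        rw [← hg]
        simp [Subalgebra.algebraMap_eq, mul_comm]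
      have hτg : (↑(g 0) : B) - x * ↑(g 1) = 0 := by
        have := congrArg τ hg'
        rw [map_add, map_mul, map_zero, hτS _ (g 0).2, hτS _ (g 1).2, hτ] at this
        linear_combination this
      have hg0 : (↑(g 0) : B) = 0 := by
        have h2g : (2 : B) * ↑(g 0) = 0 := by linear_combination hg' + hτg
        exact h2B.mul_left_cancel (h2g.trans (mul_zero (2 : B)).symm)
      have hg1 : (↑(g 1) : B) = 0 := by
        have hx1 : x * ↑(g 1) = 0 := by linear_combination hg' - hg0
        exact hxq _ (g 1).2 hx1
      intro i
      fin_cases i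
      · exact Subtype.ext hg0
      · exact Subtype.ext hg1
    have hspan : ⊤ ≤ Submodule.span S (Set.range (![1, x] : Fin 2 → B)) := by
      intro b _
      obtain ⟨p, hp, q, hq, rfl⟩ := hdecomp b
      have : p + x * q = (⟨p, hp⟩ : S) • (![1, x] 0) + (⟨q, hq⟩ : S) • (![1, x] 1) := by
        simp only [Matrix.cons_val_zero, Matrix.cons_val_one, Matrix.head_cons]
        rw [Algebra.smul_def, Algebra.smul_def]
        simp [Subalgebra.algebraMap_eq, mul_comm]
      rw [this]
      exact add_mem
        (Submodule.smul_mem _ _ (Submodule.subset_span ⟨0, rfl⟩))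
        (Submodule.smul_mem _ _ (Submodule.subset_span ⟨1, rfl⟩))
    refine ⟨Module.Basis.mk hli hspan, ?_, ?_⟩
    · rw [Module.Basis.mk_apply]; rfl
    · rw [Module.Basis.mk_apply]; rfl
end

section
/- Let A = k[e,q] and B' = A[x]/(f_0) with f_0 = x^6 - e x^4 + (e²/4)x² + q, over a field k of characteristic ≠ 2. Then the elements y = x² and z = x(x² - e/2) of B' satisfy y³ - e y² + (e²/4) y + q = 0 and z² + q = 0 respectively, and B' is free of rank 3 over the subalgebra A[z]/(z²+q) with basis 1, x, x², and free of rank 2 over the subalgebra A[y]/(y³ - ey² + (e²/4)y + q) with basis 1, x. -/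
open Polynomial

private lemma rep_aux {R B : Type*} [CommRing R] [CommRing B] [Algebra R B] (w : B) (m : R[X])
    (hm : m.Monic) (hm1 : m ≠ 1) (hw : Polynomial.aeval w m = 0) {c : B}
    (hc : c ∈ Algebra.adjoin R {w}) :
    ∃ r : R[X], r.natDegree < m.natDegree ∧ c = Polynomial.aeval w r := by
  rw [Algebra.adjoin_singleton_eq_range_aeval] at hc
  obtain ⟨p, rfl⟩ := hc
  refine ⟨p %ₘ m, Polynomial.natDegree_modByMonic_lt p hm hm1, ?_⟩
  conv_lhs => rw [← Polynomial.modByMonic_add_div p m]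
  simp [hw]

private lemma rep2 {R B : Type*} [CommRing R] [CommRing B] [Algebra R B] {w : B} {m : R[X]}
    (hm : m.Monic) (hdeg : m.natDegree = 2) (hw : Polynomial.aeval w m = 0) {c : B}
    (hc : c ∈ Algebra.adjoin R {w}) :
    ∃ a b : R, c = algebraMap R B a + algebraMap R B b * w := by
  obtain ⟨r, hr, rfl⟩ := rep_aux w m hm (by rintro rfl; simp at hdeg) hw hc
  rw [hdeg] at hr
  refine ⟨r.coeff 0, r.coeff 1, ?_⟩
  rw [Polynomial.aeval_eq_sum_range' hr]
  simp only [Finset.sum_range_succ, Finset.sum_range_zero, zero_add, pow_zero, pow_one,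
    Algebra.smul_def]
  ring

private lemma rep3 {R B : Type*} [CommRing R] [CommRing B] [Algebra R B] {w : B} {m : R[X]}
    (hm : m.Monic) (hdeg : m.natDegree = 3) (hw : Polynomial.aeval w m = 0) {c : B}
    (hc : c ∈ Algebra.adjoin R {w}) :
    ∃ a b d : R, c = algebraMap R B a + algebraMap R B b * w + algebraMap R B d * w ^ 2 := by
  obtain ⟨r, hr, rfl⟩ := rep_aux w m hm (by rintro rfl; simp at hdeg) hw hc
  rw [hdeg] at hr
  refine ⟨r.coeff 0, r.coeff 1, r.coeff 2, ?_⟩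
  rw [Polynomial.aeval_eq_sum_range' hr]
  simp only [Finset.sum_range_succ, Finset.sum_range_zero, zero_add, pow_zero, pow_one,
    Algebra.smul_def]
  ring

private lemma cons_val_five {α : Type*} (a b c d e f : α) : ![a, b, c, d, e, f] 5 = f := rfl

set_option maxHeartbeats 2000000 in
/-- Over `A = k[e,q]` (with `e = X 0`, `q = X 1` and `char k ≠ 2`), in
`B' = A[x]/(f₀)` with `f₀ = x⁶ - e x⁴ + (e²/4) x² + q`, the elements `y = x²` and
`z = x(x² - e/2)` satisfy `y³ - e y² + (e²/4) y + q = 0` and `z² + q = 0`, and `B'` is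
free of rank 3 over the subalgebra generated by `z` with basis `1, x, x²`, and free of
rank 2 over the subalgebra generated by `y` with basis `1, x`. -/
theorem g2_spectral_subcovers {k : Type*} [Field k] (h2 : (2 : k) ≠ 0)
    (f₀ : Polynomial (MvPolynomial (Fin 2) k))
    (hf₀ : f₀ = X ^ 6 - C (MvPolynomial.X 0) * X ^ 4 +
        C (MvPolynomial.X 0 ^ 2 * MvPolynomial.C ((4 : k)⁻¹)) * X ^ 2 +
        C (MvPolynomial.X 1)) :
    ((AdjoinRoot.root f₀ ^ 2) ^ 3 -
        algebraMap (MvPolynomial (Fin 2) k) (AdjoinRoot f₀) (MvPolynomial.X 0) *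
          (AdjoinRoot.root f₀ ^ 2) ^ 2 +
        algebraMap (MvPolynomial (Fin 2) k) (AdjoinRoot f₀)
            (MvPolynomial.X 0 ^ 2 * MvPolynomial.C ((4 : k)⁻¹)) *
          (AdjoinRoot.root f₀ ^ 2) +
        algebraMap (MvPolynomial (Fin 2) k) (AdjoinRoot f₀) (MvPolynomial.X 1) = 0) ∧
      ((AdjoinRoot.root f₀ * (AdjoinRoot.root f₀ ^ 2 -
            algebraMap (MvPolynomial (Fin 2) k) (AdjoinRoot f₀)
              (MvPolynomial.X 0 * MvPolynomial.C ((2 : k)⁻¹)))) ^ 2 +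
          algebraMap (MvPolynomial (Fin 2) k) (AdjoinRoot f₀) (MvPolynomial.X 1) = 0) ∧
      (∃ b : Module.Basis (Fin 3)
          (Algebra.adjoin (MvPolynomial (Fin 2) k)
            {AdjoinRoot.root f₀ * (AdjoinRoot.root f₀ ^ 2 -
              algebraMap (MvPolynomial (Fin 2) k) (AdjoinRoot f₀)
                (MvPolynomial.X 0 * MvPolynomial.C ((2 : k)⁻¹)))})
          (AdjoinRoot f₀),
        b 0 = 1 ∧ b 1 = AdjoinRoot.root f₀ ∧ b 2 = AdjoinRoot.root f₀ ^ 2) ∧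
      (∃ b : Module.Basis (Fin 2)
          (Algebra.adjoin (MvPolynomial (Fin 2) k) {AdjoinRoot.root f₀ ^ 2})
          (AdjoinRoot f₀),
        b 0 = 1 ∧ b 1 = AdjoinRoot.root f₀) := by
  have hm : f₀.Monic := by rw [hf₀]; monicity!
  have hdeg6 : f₀.natDegree = 6 := by rw [hf₀]; compute_degree!
  set x := AdjoinRoot.root f₀ with hx
  set φ := algebraMap (MvPolynomial (Fin 2) k) (AdjoinRoot f₀) with hφ
  set E : MvPolynomial (Fin 2) k := MvPolynomial.X 0 with hE
  set Q : MvPolynomial (Fin 2) k := MvPolynomial.X 1 with hQ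
  set c2 : MvPolynomial (Fin 2) k := MvPolynomial.C ((2 : k)⁻¹) with hc2
  set c4 : MvPolynomial (Fin 2) k := MvPolynomial.C ((4 : k)⁻¹) with hc4
  -- the basic relation in B
  have h₀ : x ^ 6 - φ E * x ^ 4 + φ (E ^ 2 * c4) * x ^ 2 + φ Q = 0 := by
    have h : (Polynomial.aeval x) (X ^ 6 - C E * X ^ 4 + C (E ^ 2 * c4) * X ^ 2 + C Q) = 0 := by
      rw [← hf₀, hx, AdjoinRoot.aeval_eq, AdjoinRoot.mk_self]
    simpa [hφ] using h
  have goal1 : (x ^ 2) ^ 3 - φ E * (x ^ 2) ^ 2 + φ (E ^ 2 * c4) * (x ^ 2) + φ Q = 0 := by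
    linear_combination h₀
  -- arithmetic identities
  have hA1 : (E * c2) * 2 = E := by
    have h2' : (2 : MvPolynomial (Fin 2) k) = MvPolynomial.C 2 :=
      (map_ofNat (MvPolynomial.C : k →+* MvPolynomial (Fin 2) k) 2).symm
    rw [hc2, hE, mul_assoc, h2', ← map_mul, inv_mul_cancel₀ h2, map_one, mul_one]
  have key : c2 * c2 = c4 := by
    rw [hc2, hc4, ← map_mul]
    congr 1
    rw [← mul_inv]; norm_num
  have hA2 : (E * c2) * (E * c2) = E ^ 2 * c4 := by
    linear_combination E ^ 2 * key
  have h1 : φ (E * c2) * 2 = φ E := by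
    rw [show (2 : AdjoinRoot f₀) = φ 2 from (map_ofNat φ 2).symm, ← map_mul, hA1]
  have h2' : φ (E * c2) * φ (E * c2) = φ (E ^ 2 * c4) := by
    rw [← map_mul, hA2]
  set z := x * (x ^ 2 - φ (E * c2)) with hz
  have goal2 : z ^ 2 + φ Q = 0 := by
    rw [hz]
    linear_combination h₀ - x ^ 4 * h1 + x ^ 2 * h2'
  -- the power basis 1, x, ..., x^5 over A
  let b6 : Module.Basis (Fin 6) (MvPolynomial (Fin 2) k) (AdjoinRoot f₀) :=
    (AdjoinRoot.powerBasis' hm).basis.reindex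
      (finCongr (by rw [AdjoinRoot.powerBasis'_dim, hdeg6]))
  have hb6 : ∀ i : Fin 6, b6 i = x ^ (i : ℕ) := by
    intro i
    rw [show b6 i = (AdjoinRoot.powerBasis' hm).basis ((finCongr
      (by rw [AdjoinRoot.powerBasis'_dim, hdeg6] :
        (AdjoinRoot.powerBasis' hm).dim = 6)).symm i) from Module.Basis.reindex_apply _ _ i,
      PowerBasis.basis_eq_pow, AdjoinRoot.powerBasis'_gen, hx]
    simp
  have hli6 := Fintype.linearIndependent_iff.mp b6.linearIndependent
  refine ⟨goal1, goal2, ?_, ?_⟩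
  · -- rank 3 over A[z]
    have hmz : (X ^ 2 + C Q : (MvPolynomial (Fin 2) k)[X]).Monic := by monicity!
    have hdz : (X ^ 2 + C Q : (MvPolynomial (Fin 2) k)[X]).natDegree = 2 := by compute_degree!
    have hwz : Polynomial.aeval z (X ^ 2 + C Q : (MvPolynomial (Fin 2) k)[X]) = 0 := by
      simpa [hφ] using goal2
    set R := Algebra.adjoin (MvPolynomial (Fin 2) k) {z} with hR
    have hzR : z ∈ R := Algebra.self_mem_adjoin_singleton _ _
    set v3 : Fin 3 → AdjoinRoot f₀ := ![1, x, x ^ 2] with hv3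
    have hsm : ∀ (c : R) (b : AdjoinRoot f₀), c • b = (c : AdjoinRoot f₀) * b :=
      fun c b => by rw [Subalgebra.smul_def, smul_eq_mul]
    have hli3 : LinearIndependent R v3 := by
      rw [Fintype.linearIndependent_iff]
      intro g hg
      obtain ⟨a0, b0, e0⟩ := rep2 hmz hdz hwz (g 0).2
      obtain ⟨a1, b1, e1⟩ := rep2 hmz hdz hwz (g 1).2
      obtain ⟨a2, b2, e2⟩ := rep2 hmz hdz hwz (g 2).2
      have hg' : (g 0 : AdjoinRoot f₀) * 1 + (g 1 : AdjoinRoot f₀) * x +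
          (g 2 : AdjoinRoot f₀) * x ^ 2 = 0 := by
        rw [Fin.sum_univ_three] at hg
        simpa [hsm, hv3] using hg
      rw [e0, e1, e2, hz] at hg'
      simp only [map_sub, map_mul] at hg'
      have hall := hli6 ![a0, a1 - E * c2 * b0, a2 - E * c2 * b1, b0 - E * c2 * b2, b1, b2]
        (by
          rw [Fin.sum_univ_six]
          simp only [hb6, Matrix.cons_val_zero, Matrix.cons_val_one, Matrix.head_cons,
            Matrix.cons_val_two, Matrix.tail_cons, Matrix.cons_val_three, Matrix.cons_val_four,
            cons_val_five, Fin.val_zero, Fin.val_one, Algebra.smul_def, map_sub, map_mul, hφ]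
          rw [← hφ]
          simp only [show ((0 : Fin 6) : ℕ) = 0 from rfl, show ((1 : Fin 6) : ℕ) = 1 from rfl,
            show ((2 : Fin 6) : ℕ) = 2 from rfl, show ((3 : Fin 6) : ℕ) = 3 from rfl,
            show ((4 : Fin 6) : ℕ) = 4 from rfl, show ((5 : Fin 6) : ℕ) = 5 from rfl]
          linear_combination hg')
      have hb2 : b2 = 0 := by simpa using hall 5
      have hb1 : b1 = 0 := by simpa using hall 4
      have hb0 : b0 = 0 := by
        have h3 := hall 3
        simp only [Matrix.cons_val_three, Matrix.tail_cons, Matrix.head_cons] at h3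
        linear_combination h3 + E * c2 * hb2
      have ha2 : a2 = 0 := by
        have h3 := hall 2
        simp only [Matrix.cons_val_two, Matrix.tail_cons, Matrix.head_cons] at h3
        linear_combination h3 + E * c2 * hb1
      have ha1 : a1 = 0 := by
        have h3 := hall 1
        simp only [Matrix.cons_val_one, Matrix.head_cons, Matrix.cons_val_zero] at h3
        linear_combination h3 + E * c2 * hb0
      have ha0 : a0 = 0 := by simpa using hall 0
      intro i
      fin_cases i
      · show g 0 = 0
        exact Subtype.ext (by rw [e0, ha0, hb0]; simp)
      · show g 1 = 0
        exact Subtype.ext (by rw [e1, ha1, hb1]; simp)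
      · show g 2 = 0
        exact Subtype.ext (by rw [e2, ha2, hb2]; simp)
    have hmem1 : (1 : AdjoinRoot f₀) ∈ Submodule.span R (Set.range v3) :=
      Submodule.subset_span ⟨0, by simp [hv3]⟩
    have hmemx : x ∈ Submodule.span R (Set.range v3) :=
      Submodule.subset_span ⟨1, by simp [hv3]⟩
    have hmemx2 : x ^ 2 ∈ Submodule.span R (Set.range v3) :=
      Submodule.subset_span ⟨2, by simp [hv3]⟩
    have hcR : φ (E * c2) ∈ R := by rw [hφ]; exact R.algebraMap_mem _
    have hx3m : x ^ 3 ∈ Submodule.span R (Set.range v3) := by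
      have h3 : (⟨z, hzR⟩ : R) • (1 : AdjoinRoot f₀) + (⟨φ (E * c2), hcR⟩ : R) • x = x ^ 3 := by
        rw [hsm, hsm]
        show z * 1 + φ (E * c2) * x = x ^ 3
        rw [hz]; ring
      have hmem := Submodule.add_mem _ (Submodule.smul_mem _ (⟨z, hzR⟩ : R) hmem1)
        (Submodule.smul_mem _ (⟨φ (E * c2), hcR⟩ : R) hmemx)
      rwa [h3] at hmem
    have hx4m : x ^ 4 ∈ Submodule.span R (Set.range v3) := by
      have h4 : (⟨z, hzR⟩ : R) • x + (⟨φ (E * c2), hcR⟩ : R) • x ^ 2 = x ^ 4 := by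
        rw [hsm, hsm]
        show z * x + φ (E * c2) * x ^ 2 = x ^ 4
        rw [hz]; ring
      have hmem := Submodule.add_mem _ (Submodule.smul_mem _ (⟨z, hzR⟩ : R) hmemx)
        (Submodule.smul_mem _ (⟨φ (E * c2), hcR⟩ : R) hmemx2)
      rwa [h4] at hmem
    have hx5m : x ^ 5 ∈ Submodule.span R (Set.range v3) := by
      have h5 : (⟨z, hzR⟩ : R) • x ^ 2 + (⟨φ (E * c2), hcR⟩ : R) • x ^ 3 = x ^ 5 := by
        rw [hsm, hsm]
        show z * x ^ 2 + φ (E * c2) * x ^ 3 = x ^ 5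
        rw [hz]; ring
      have hmem := Submodule.add_mem _ (Submodule.smul_mem _ (⟨z, hzR⟩ : R) hmemx2)
        (Submodule.smul_mem _ (⟨φ (E * c2), hcR⟩ : R) hx3m)
      rwa [h5] at hmem
    have hspan3 : ⊤ ≤ Submodule.span R (Set.range v3) := by
      intro w _
      have hw : w ∈ Submodule.span (MvPolynomial (Fin 2) k) (Set.range b6) := by
        rw [b6.span_eq]; trivial
      have hsub : Set.range b6 ⊆
          ((Submodule.span R (Set.range v3)).restrictScalars (MvPolynomial (Fin 2) k) :
            Set (AdjoinRoot f₀)) := by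
        rintro u ⟨j, rfl⟩
        simp only [SetLike.mem_coe, Submodule.restrictScalars_mem]
        rw [hb6]
        fin_cases j
        · simpa using hmem1
        · simpa using hmemx
        · simpa using hmemx2
        · simpa using hx3m
        · simpa using hx4m
        · simpa using hx5m
      exact Submodule.span_le.mpr hsub hw
    refine ⟨Module.Basis.mk hli3 hspan3, ?_, ?_, ?_⟩ <;>
      simp [Module.Basis.mk_apply, hv3]
  · -- rank 2 over A[y]
    have hmy : (X ^ 3 - C E * X ^ 2 + C (E ^ 2 * c4) * X + C Q :
        (MvPolynomial (Fin 2) k)[X]).Monic := by monicity!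
    have hdy : (X ^ 3 - C E * X ^ 2 + C (E ^ 2 * c4) * X + C Q :
        (MvPolynomial (Fin 2) k)[X]).natDegree = 3 := by compute_degree!
    have hwy : Polynomial.aeval (x ^ 2) (X ^ 3 - C E * X ^ 2 + C (E ^ 2 * c4) * X + C Q :
        (MvPolynomial (Fin 2) k)[X]) = 0 := by
      simpa [hφ] using goal1
    set R := Algebra.adjoin (MvPolynomial (Fin 2) k) {x ^ 2} with hR
    have hyR : x ^ 2 ∈ R := Algebra.self_mem_adjoin_singleton _ _
    set v2 : Fin 2 → AdjoinRoot f₀ := ![1, x] with hv2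
    have hsm : ∀ (c : R) (b : AdjoinRoot f₀), c • b = (c : AdjoinRoot f₀) * b :=
      fun c b => by rw [Subalgebra.smul_def, smul_eq_mul]
    have hli2 : LinearIndependent R v2 := by
      rw [Fintype.linearIndependent_iff]
      intro g hg
      obtain ⟨a0, b0, d0, e0⟩ := rep3 hmy hdy hwy (g 0).2
      obtain ⟨a1, b1, d1, e1⟩ := rep3 hmy hdy hwy (g 1).2
      have hg' : (g 0 : AdjoinRoot f₀) * 1 + (g 1 : AdjoinRoot f₀) * x = 0 := by
        rw [Fin.sum_univ_two] at hg
        simpa [hsm, hv2] using hg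
      rw [e0, e1] at hg'
      have hall := hli6 ![a0, a1, b0, b1, d0, d1]
        (by
          rw [Fin.sum_univ_six]
          simp only [hb6, Matrix.cons_val_zero, Matrix.cons_val_one, Matrix.head_cons,
            Matrix.cons_val_two, Matrix.tail_cons, Matrix.cons_val_three, Matrix.cons_val_four,
            cons_val_five, Fin.val_zero, Fin.val_one, Algebra.smul_def, hφ]
          rw [← hφ]
          simp only [show ((0 : Fin 6) : ℕ) = 0 from rfl, show ((1 : Fin 6) : ℕ) = 1 from rfl,
            show ((2 : Fin 6) : ℕ) = 2 from rfl, show ((3 : Fin 6) : ℕ) = 3 from rfl,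
            show ((4 : Fin 6) : ℕ) = 4 from rfl, show ((5 : Fin 6) : ℕ) = 5 from rfl]
          linear_combination hg')
      have hb0 : b0 = 0 := by simpa using hall 2
      have hb1 : b1 = 0 := by simpa using hall 3
      have hd0 : d0 = 0 := by simpa using hall 4
      have hd1 : d1 = 0 := by simpa using hall 5
      have ha0 : a0 = 0 := by simpa using hall 0
      have ha1 : a1 = 0 := by simpa using hall 1
      intro i
      fin_cases i
      · show g 0 = 0
        exact Subtype.ext (by rw [e0, ha0, hb0, hd0]; simp)
      · show g 1 = 0
        exact Subtype.ext (by rw [e1, ha1, hb1, hd1]; simp)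
    have hmem1 : (1 : AdjoinRoot f₀) ∈ Submodule.span R (Set.range v2) :=
      Submodule.subset_span ⟨0, by simp [hv2]⟩
    have hmemx : x ∈ Submodule.span R (Set.range v2) :=
      Submodule.subset_span ⟨1, by simp [hv2]⟩
    have hy2R : (x ^ 2) ^ 2 ∈ R := pow_mem hyR 2
    have hx2m : x ^ 2 ∈ Submodule.span R (Set.range v2) := by
      have h' : (⟨x ^ 2, hyR⟩ : R) • (1 : AdjoinRoot f₀) = x ^ 2 := by
        rw [hsm]; show x ^ 2 * 1 = x ^ 2; ring
      have hmem := Submodule.smul_mem _ (⟨x ^ 2, hyR⟩ : R) hmem1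
      rwa [h'] at hmem
    have hx3m : x ^ 3 ∈ Submodule.span R (Set.range v2) := by
      have h' : (⟨x ^ 2, hyR⟩ : R) • x = x ^ 3 := by
        rw [hsm]; show x ^ 2 * x = x ^ 3; ring
      have hmem := Submodule.smul_mem _ (⟨x ^ 2, hyR⟩ : R) hmemx
      rwa [h'] at hmem
    have hx4m : x ^ 4 ∈ Submodule.span R (Set.range v2) := by
      have h' : (⟨(x ^ 2) ^ 2, hy2R⟩ : R) • (1 : AdjoinRoot f₀) = x ^ 4 := by
        rw [hsm]; show (x ^ 2) ^ 2 * 1 = x ^ 4; ring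
      have hmem := Submodule.smul_mem _ (⟨(x ^ 2) ^ 2, hy2R⟩ : R) hmem1
      rwa [h'] at hmem
    have hx5m : x ^ 5 ∈ Submodule.span R (Set.range v2) := by
      have h' : (⟨(x ^ 2) ^ 2, hy2R⟩ : R) • x = x ^ 5 := by
        rw [hsm]; show (x ^ 2) ^ 2 * x = x ^ 5; ring
      have hmem := Submodule.smul_mem _ (⟨(x ^ 2) ^ 2, hy2R⟩ : R) hmemx
      rwa [h'] at hmem
    have hspan2 : ⊤ ≤ Submodule.span R (Set.range v2) := by
      intro w _
      have hw : w ∈ Submodule.span (MvPolynomial (Fin 2) k) (Set.range b6) := by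
        rw [b6.span_eq]; trivial
      have hsub : Set.range b6 ⊆
          ((Submodule.span R (Set.range v2)).restrictScalars (MvPolynomial (Fin 2) k) :
            Set (AdjoinRoot f₀)) := by
        rintro u ⟨j, rfl⟩
        simp only [SetLike.mem_coe, Submodule.restrictScalars_mem]
        rw [hb6]
        fin_cases j
        · simpa using hmem1
        · simpa using hmemx
        · simpa using hx2m
        · simpa using hx3m
        · simpa using hx4m
        · simpa using hx5m
      exact Submodule.span_le.mpr hsub hw
    refine ⟨Module.Basis.mk hli2 hspan2, ?_, ?_⟩ <;>
      simp [Module.Basis.mk_apply, hv2]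
end

section
/- Let k be a field, A a k-algebra, A' a finite flat A-algebra, and B a finite flat A'-algebra of degree d, with B ≅ A'[x]/(P_2) for a monic polynomial P_2 of degree d. Then for each b ∈ B there is a surjective A-algebra homomorphism from the d-fold tensor power ⊗_{A'}^d B to A' ⊗_S R (where S = k[α_1,...,α_d] maps to A' via the coefficients of P_2 and R = k[x_1,...,x_d] is the polynomial algebra with its S-module structure via elementary symmetric polynomials), given on the i-th tensor factor by x ↦ x_i, and this homomorphism is equivariant for the S_d-actions permuting tensor factors and variables respectively. -/
set_option maxRecDepth 4000

open Polynomial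

lemma key_vieta {R : Type*} [CommRing R] {d : ℕ} (i : Fin d) :
    (MvPolynomial.X i : MvPolynomial (Fin d) R) ^ d +
      ∑ j : Fin d, (-1 : MvPolynomial (Fin d) R) ^ ((j : ℕ) + 1) *
        MvPolynomial.esymm (Fin d) R ((j : ℕ) + 1) *
        MvPolynomial.X i ^ (d - 1 - (j : ℕ)) = 0 := by
  have h0 := congrArg (Polynomial.eval (-(MvPolynomial.X i : MvPolynomial (Fin d) R)))
    (MvPolynomial.prod_C_add_X_eq_sum_esymm R (Fin d))
  simp only [Polynomial.eval_prod, Polynomial.eval_add, Polynomial.eval_X, Polynomial.eval_C,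
    Polynomial.eval_finset_sum, Polynomial.eval_mul, Polynomial.eval_pow,
    Fintype.card_fin] at h0
  have hL : (∏ l : Fin d, (-(MvPolynomial.X i : MvPolynomial (Fin d) R) + MvPolynomial.X l)) = 0 :=
    Finset.prod_eq_zero (Finset.mem_univ i) (by ring)
  rw [hL] at h0
  have h1 : (0 : MvPolynomial (Fin d) R) =
      ∑ j ∈ Finset.range (d + 1), (-1 : MvPolynomial (Fin d) R) ^ j *
        MvPolynomial.esymm (Fin d) R j * MvPolynomial.X i ^ (d - j) := by
    calc (0 : MvPolynomial (Fin d) R) = (-1) ^ d * 0 := by ring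
    _ = (-1) ^ d * ∑ x ∈ Finset.range (d + 1),
          MvPolynomial.esymm (Fin d) R x * (-MvPolynomial.X i) ^ (d - x) := by rw [← h0]
    _ = ∑ j ∈ Finset.range (d + 1), (-1 : MvPolynomial (Fin d) R) ^ d *
          (MvPolynomial.esymm (Fin d) R j * (-MvPolynomial.X i) ^ (d - j)) := Finset.mul_sum _ _ _
    _ = ∑ j ∈ Finset.range (d + 1), (-1 : MvPolynomial (Fin d) R) ^ j *
          MvPolynomial.esymm (Fin d) R j * MvPolynomial.X i ^ (d - j) := by
        refine Finset.sum_congr rfl fun j hj => ?_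
        have hj' : j ≤ d := by have := Finset.mem_range.mp hj; omega
        have hs : (-1 : MvPolynomial (Fin d) R) ^ d * (-1) ^ (d - j) = (-1) ^ j := by
          rw [← pow_add, show d + (d - j) = 2 * (d - j) + j by omega, pow_add, pow_mul,
            neg_one_sq, one_pow, one_mul]
        calc (-1 : MvPolynomial (Fin d) R) ^ d *
              (MvPolynomial.esymm (Fin d) R j * (-MvPolynomial.X i) ^ (d - j))
            = ((-1) ^ d * (-1) ^ (d - j)) * MvPolynomial.esymm (Fin d) R j *
              MvPolynomial.X i ^ (d - j) := by rw [neg_pow]; ring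
        _ = (-1 : MvPolynomial (Fin d) R) ^ j * MvPolynomial.esymm (Fin d) R j *
              MvPolynomial.X i ^ (d - j) := by rw [hs]
  rw [Finset.sum_range_succ'] at h1
  simp only [pow_zero, MvPolynomial.esymm_zero, one_mul, mul_one, Nat.sub_zero] at h1
  rw [Fin.sum_univ_eq_sum_range
    (fun j => (-1 : MvPolynomial (Fin d) R) ^ (j + 1) *
      MvPolynomial.esymm (Fin d) R (j + 1) * MvPolynomial.X i ^ (d - 1 - j))]
  have h2 : ∑ x ∈ Finset.range d, (-1 : MvPolynomial (Fin d) R) ^ (x + 1) *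
      MvPolynomial.esymm (Fin d) R (x + 1) * MvPolynomial.X i ^ (d - 1 - x) =
      ∑ x ∈ Finset.range d, (-1 : MvPolynomial (Fin d) R) ^ (x + 1) *
      MvPolynomial.esymm (Fin d) R (x + 1) * MvPolynomial.X i ^ (d - (x + 1)) :=
    Finset.sum_congr rfl fun x _ => by rw [show d - 1 - x = d - (x + 1) by omega]
  rw [h2]
  linear_combination -h1

/-- For `B = A'[x]/(P₂)` with `P₂ = x^d + a'_1 x^{d-1} + ... + a'_d` monic of degree
`d` over a finite flat `A`-algebra `A'` (over a `k`-algebra `A`), there is a surjective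
`A'`-algebra (hence `A`-algebra) homomorphism from the `d`-fold tensor power
`⊗_{A'}^d B` to `A' ⊗_S R = A'[x_1,...,x_d]/((-1)^i e_i(x) - a'_i, i = 1..d)`, sending
the root `x` in the `i`-th tensor factor to `x_i`, equivariant for the `S_d`-actions
permuting tensor factors and variables respectively. -/
theorem tensor_power_to_special_component {k A A' : Type*} [Field k] [CommRing A]
    [CommRing A'] [Algebra k A] [Algebra A A'] [Algebra k A'] [IsScalarTower k A A']
    [Module.Finite A A'] [Module.Flat A A']
    {d : ℕ} (hd : 0 < d) (a' : Fin d → A') (P₂ : Polynomial A')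
    (hP₂ : P₂ = X ^ d + ∑ i : Fin d, C (a' i) * X ^ (d - 1 - (i : ℕ))) :
    ∃ Φ : PiTensorProduct A' (fun _ : Fin d => AdjoinRoot P₂) →ₐ[A']
        (MvPolynomial (Fin d) A' ⧸ Ideal.span (Set.range fun i : Fin d =>
          (-1 : MvPolynomial (Fin d) A') ^ ((i : ℕ) + 1) *
              MvPolynomial.esymm (Fin d) A' ((i : ℕ) + 1) - MvPolynomial.C (a' i))),
      Function.Surjective Φ ∧
      (∀ i : Fin d,
        Φ (PiTensorProduct.tprod A'
            (fun j => if j = i then AdjoinRoot.root P₂ else 1)) =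
          Ideal.Quotient.mk _ (MvPolynomial.X i)) ∧
      (∀ (σ : Equiv.Perm (Fin d)) (v : Fin d → AdjoinRoot P₂)
          (p : MvPolynomial (Fin d) A'),
        Φ (PiTensorProduct.tprod A' v) = Ideal.Quotient.mk _ p →
        Φ (PiTensorProduct.tprod A' (fun i => v (σ i))) =
          Ideal.Quotient.mk _ (MvPolynomial.rename ⇑σ⁻¹ p)) := by
  classical
  set gen : Fin d → MvPolynomial (Fin d) A' := fun i =>
    (-1 : MvPolynomial (Fin d) A') ^ ((i : ℕ) + 1) *
      MvPolynomial.esymm (Fin d) A' ((i : ℕ) + 1) - MvPolynomial.C (a' i) with hgen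
  set I : Ideal (MvPolynomial (Fin d) A') := Ideal.span (Set.range gen) with hI
  set Q := MvPolynomial (Fin d) A' ⧸ I with hQ
  have hgenI : ∀ j : Fin d, gen j ∈ I := fun j => Ideal.subset_span ⟨j, rfl⟩
  -- the coefficients are congruent to signed elementary symmetric polynomials
  have hmkC : ∀ j : Fin d, Ideal.Quotient.mk I (MvPolynomial.C (a' j)) =
      Ideal.Quotient.mk I ((-1 : MvPolynomial (Fin d) A') ^ ((j : ℕ) + 1) *
        MvPolynomial.esymm (Fin d) A' ((j : ℕ) + 1)) := by
    intro j
    rw [Ideal.Quotient.eq]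
    simpa [gen] using I.neg_mem (hgenI j)
  -- each variable is a root of P₂ in the quotient
  have haeval : ∀ i : Fin d,
      Polynomial.aeval (Ideal.Quotient.mk I (MvPolynomial.X i)) P₂ = 0 := by
    intro i
    have h := Polynomial.aeval_algHom_apply (Ideal.Quotient.mkₐ A' I)
      (MvPolynomial.X i) P₂
    rw [show ⇑(Ideal.Quotient.mkₐ A' I) = ⇑(Ideal.Quotient.mk I) from rfl] at h
    rw [h, hP₂]
    simp only [map_add, map_pow, map_sum, map_mul, Polynomial.aeval_X, Polynomial.aeval_C,
      MvPolynomial.algebraMap_eq]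
    simp only [hmkC, ← map_pow, ← map_mul, ← map_sum, ← map_add]
    have hkey : (MvPolynomial.X i ^ d +
        ∑ j : Fin d, ((-1 : MvPolynomial (Fin d) A') ^ ((j : ℕ) + 1) *
          MvPolynomial.esymm (Fin d) A' ((j : ℕ) + 1)) * MvPolynomial.X i ^ (d - 1 - (j : ℕ))) =
        (0 : MvPolynomial (Fin d) A') := by
      rw [← key_vieta (R := A') i]
    rw [hkey, map_zero]
  -- the algebra maps from each tensor factor
  set g : Fin d → (AdjoinRoot P₂ →ₐ[A'] Q) := fun i =>
    AdjoinRoot.liftAlgHom P₂ (Algebra.ofId A' Q) (Ideal.Quotient.mk I (MvPolynomial.X i)) (haeval i) with hg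
  have hgroot : ∀ i, g i (AdjoinRoot.root P₂) = Ideal.Quotient.mk I (MvPolynomial.X i) :=
    fun i => by simp only [hg]; exact AdjoinRoot.liftAlgHom_root (h := haeval i) ..
  set F : MultilinearMap A' (fun _ : Fin d => AdjoinRoot P₂) Q :=
    (MultilinearMap.mkPiAlgebra A' (Fin d) Q).compLinearMap (fun i => (g i).toLinearMap)
    with hF
  have hFapp : ∀ v : Fin d → AdjoinRoot P₂, F v = ∏ i, g i (v i) := fun v => by
    simp [hF, MultilinearMap.compLinearMap_apply, MultilinearMap.mkPiAlgebra_apply]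
  have hone : F 1 = 1 := by simp [hFapp]
  have hmul : ∀ x y, F (x * y) = F x * F y := by
    intro x y
    simp [hFapp, Pi.mul_apply, map_mul, Finset.prod_mul_distrib]
  have hPhi : ∀ v : Fin d → AdjoinRoot P₂,
      (PiTensorProduct.liftAlgHom F hone hmul) (PiTensorProduct.tprod A' v) = ∏ i, g i (v i) := by
    intro v
    simp only [PiTensorProduct.liftAlgHom_apply, PiTensorProduct.lift.tprod]
    exact hFapp v
  have hroot : ∀ i : Fin d,
      (PiTensorProduct.liftAlgHom F hone hmul) (PiTensorProduct.tprod A'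
        (fun j => if j = i then AdjoinRoot.root P₂ else 1)) =
      Ideal.Quotient.mk I (MvPolynomial.X i) := by
    intro i
    rw [hPhi]
    rw [Finset.prod_congr rfl (fun j (_ : j ∈ Finset.univ) => show
        g j (if j = i then AdjoinRoot.root P₂ else 1) =
          (if j = i then Ideal.Quotient.mk I (MvPolynomial.X i) else 1) by
      split_ifs with h
      · subst h; exact hgroot j
      · exact map_one _)]
    simp
  refine ⟨PiTensorProduct.liftAlgHom F hone hmul, ?_, fun i => hroot i, ?_⟩
  · -- surjectivity
    rw [← AlgHom.range_eq_top, eq_top_iff]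
    have h1 : Algebra.adjoin A' (Set.range fun i : Fin d =>
        Ideal.Quotient.mk I (MvPolynomial.X i)) = ⊤ := by
      rw [show (Set.range fun i : Fin d => Ideal.Quotient.mk I (MvPolynomial.X i)) =
          ⇑(Ideal.Quotient.mkₐ A' I) '' Set.range MvPolynomial.X by
        rw [← Set.range_comp]; rfl]
      rw [← AlgHom.map_adjoin, MvPolynomial.adjoin_range_X, Algebra.map_top]
      exact (AlgHom.range_eq_top _).mpr (Ideal.Quotient.mkₐ_surjective A' I)
    rw [← h1]
    apply Algebra.adjoin_le
    rintro _ ⟨i, rfl⟩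
    exact ⟨_, hroot i⟩
  · -- equivariance
    intro σ v p hp
    have hker : ∀ a ∈ I, ((Ideal.Quotient.mkₐ A' I).comp
        (MvPolynomial.rename (⇑σ⁻¹ : Fin d → Fin d))) a = 0 := by
      intro a ha
      have hle : I ≤ Ideal.comap (MvPolynomial.rename (⇑σ⁻¹ : Fin d → Fin d)).toRingHom I := by
        rw [hI, Ideal.span_le]
        rintro _ ⟨j, rfl⟩
        show MvPolynomial.rename (⇑σ⁻¹) (gen j) ∈ I
        simp only [hgen, map_sub, map_mul, map_pow, map_neg, map_one,
          MvPolynomial.rename_C, MvPolynomial.rename_esymm]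
        exact hgenI j
      show Ideal.Quotient.mk I (MvPolynomial.rename (⇑σ⁻¹) a) = 0
      exact Ideal.Quotient.eq_zero_iff_mem.mpr (hle ha)
    set ψ : Q →ₐ[A'] Q := Ideal.Quotient.liftₐ I ((Ideal.Quotient.mkₐ A' I).comp
      (MvPolynomial.rename (⇑σ⁻¹ : Fin d → Fin d))) hker with hψdef
    have hψ : ∀ q : MvPolynomial (Fin d) A', ψ (Ideal.Quotient.mk I q) =
        Ideal.Quotient.mk I (MvPolynomial.rename (⇑σ⁻¹) q) := by
      intro q
      rfl
    have hcomp : ∀ (i : Fin d) (x : AdjoinRoot P₂), ψ (g i x) = g (σ⁻¹ i) x := by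
      intro i x
      have : ψ.comp (g i) = g (σ⁻¹ i) := by
        apply AdjoinRoot.algHom_ext
        rw [AlgHom.comp_apply, hgroot, hψ, MvPolynomial.rename_X, hgroot]
      exact DFunLike.congr_fun this x
    have hmain : Ideal.Quotient.mk I (MvPolynomial.rename (⇑σ⁻¹) p) =
        ∏ i, g (σ⁻¹ i) (v i) := by
      rw [← hψ p, ← hp, hPhi, map_prod]
      exact Finset.prod_congr rfl fun i _ => hcomp i (v i)
    rw [hPhi, hmain, ← Equiv.prod_comp σ (fun i => g (σ⁻¹ i) (v i))]
    exact Finset.prod_congr rfl fun i _ => by rw [Equiv.Perm.inv_def, Equiv.symm_apply_apply]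
end
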